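/- Fix a real parameter η ≥ 1 and a real number r with 0 ≤ r ≤ 1. For each f ∈ [0,1] let V(f) denote the infimum of s(α) over all α = (α₁, α₂, α_sr) ∈ [0,1] × [0,1] × [0,η] satisfying min(I_S(α,f), I_D(α,f)) ≤ r. Then max_{f ∈ [0,1]} V(f) = min{η+2, 4} − 3r, and this maximum is attained at f = 1/3. -/
import Mathlib


open Set

/-- The SNR exponent `s(α)` of the joint density of channel exponents
`α = (α₁, α₂, α_sr)`. -/
noncomputable def sExp (η : ℝ) (a : ℝ × ℝ × ℝ) : ℝ :=
  if a.1 + a.2.1 ≤ 1 then η + 4 - 3 * a.1 - 2 * a.2.1 - a.2.2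
  else η + 3 - 2 * a.1 - a.2.1 - a.2.2

/-- Source-side cut mutual information exponent `I_S(α, f)`. -/
noncomputable def IS (a : ℝ × ℝ × ℝ) (f : ℝ) : ℝ :=
  a.1 + f * max (a.2.2 - a.1) 0

/-- Destination-side cut mutual information exponent `I_D(α, f)`. -/
noncomputable def ID (a : ℝ × ℝ × ℝ) (f : ℝ) : ℝ :=
  a.1 + (1 - f) * a.2.1

/-- The blind-scheduling diversity order for a fixed schedule `f`: the
infimum of `s(α)` over the outage region at multiplexing gain `r`. -/
noncomputable def Vblind (η r f : ℝ) : ℝ :=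
  sInf {x : ℝ | ∃ a : ℝ × ℝ × ℝ, a.1 ∈ Icc (0:ℝ) 1 ∧ a.2.1 ∈ Icc (0:ℝ) 1 ∧
    a.2.2 ∈ Icc (0:ℝ) η ∧ min (IS a f) (ID a f) ≤ r ∧ sExp η a = x}

section aux

variable (η r : ℝ)

lemma Vblind_set_bddBelow (hη : 1 ≤ η) (f : ℝ) :
    BddBelow {x : ℝ | ∃ a : ℝ × ℝ × ℝ, a.1 ∈ Icc (0:ℝ) 1 ∧ a.2.1 ∈ Icc (0:ℝ) 1 ∧
      a.2.2 ∈ Icc (0:ℝ) η ∧ min (IS a f) (ID a f) ≤ r ∧ sExp η a = x} := by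
  refine ⟨-1, ?_⟩
  rintro x ⟨a, h1, h2, h3, _, hs⟩
  subst hs
  unfold sExp
  split_ifs <;>
    linarith [h1.1, h1.2, h2.1, h2.2, h3.1, h3.2]

lemma mem_A (hη : 1 ≤ η) (hr0 : 0 ≤ r) (hr1 : r ≤ 1) (f : ℝ) :
    (4 - 3 * r) ∈ {x : ℝ | ∃ a : ℝ × ℝ × ℝ, a.1 ∈ Icc (0:ℝ) 1 ∧ a.2.1 ∈ Icc (0:ℝ) 1 ∧
      a.2.2 ∈ Icc (0:ℝ) η ∧ min (IS a f) (ID a f) ≤ r ∧ sExp η a = x} := by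
  refine ⟨(r, 0, η), ⟨hr0, hr1⟩, ⟨le_refl 0, zero_le_one⟩, ⟨by linarith, le_refl η⟩, ?_, ?_⟩
  · have : ID (r, 0, η) f = r := by simp [ID]
    calc min (IS (r, 0, η) f) (ID (r, 0, η) f) ≤ ID (r, 0, η) f := min_le_right _ _
      _ = r := this
  · unfold sExp
    simp only
    rw [if_pos (by linarith : r + 0 ≤ 1)]
    ring

lemma mem_B (hη : 1 ≤ η) (hr0 : 0 ≤ r) (hr1 : r ≤ 1) (f : ℝ) :
    (η + 2 - 3 * r) ∈ {x : ℝ | ∃ a : ℝ × ℝ × ℝ, a.1 ∈ Icc (0:ℝ) 1 ∧ a.2.1 ∈ Icc (0:ℝ) 1 ∧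
      a.2.2 ∈ Icc (0:ℝ) η ∧ min (IS a f) (ID a f) ≤ r ∧ sExp η a = x} := by
  refine ⟨(r, 1, r), ⟨hr0, hr1⟩, ⟨zero_le_one, le_refl 1⟩, ⟨hr0, by linarith⟩, ?_, ?_⟩
  · have : IS (r, 1, r) f = r := by simp [IS]
    calc min (IS (r, 1, r) f) (ID (r, 1, r) f) ≤ IS (r, 1, r) f := min_le_left _ _
      _ = r := this
  · unfold sExp
    simp only
    split_ifs with h
    · have : r = 0 := le_antisymm (by linarith) hr0
      rw [this]; ring
    · ring

end aux

/-- In the low-rate region `r ≤ 1`, blind scheduling is DMT optimal: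
`max_{f ∈ [0,1]} V(f) = min{η+2, 4} − 3r`, attained at `f = 1/3`. -/
theorem blind_schedule_optimal (η r : ℝ) (hη : 1 ≤ η) (hr0 : 0 ≤ r) (hr1 : r ≤ 1) :
    (∀ f ∈ Icc (0:ℝ) 1, Vblind η r f ≤ min (η + 2) 4 - 3 * r) ∧
    Vblind η r (1/3) = min (η + 2) 4 - 3 * r := by
  have hub : ∀ f : ℝ, Vblind η r f ≤ min (η + 2) 4 - 3 * r := by
    intro f
    have hbdd := Vblind_set_bddBelow η r hη f
    have h1 : Vblind η r f ≤ 4 - 3 * r := csInf_le hbdd (mem_A η r hη hr0 hr1 f)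
    have h2 : Vblind η r f ≤ η + 2 - 3 * r := csInf_le hbdd (mem_B η r hη hr0 hr1 f)
    rcases le_total (η + 2) 4 with h | h
    · rw [min_eq_left h]; linarith
    · rw [min_eq_right h]; linarith
  refine ⟨fun f _ => hub f, le_antisymm (hub _) ?_⟩
  apply le_csInf ⟨_, mem_A η r hη hr0 hr1 (1/3)⟩
  rintro x ⟨a, h1, h2, h3, hmin, hs⟩
  subst hs
  obtain ⟨h10, h11⟩ := h1
  obtain ⟨h20, h21⟩ := h2
  obtain ⟨h30, h31⟩ := h3
  have hc1 : min (η + 2) 4 ≤ η + 2 := min_le_left _ _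
  have hc2 : min (η + 2) 4 ≤ 4 := min_le_right _ _
  have hM1 : a.2.2 - a.1 ≤ max (a.2.2 - a.1) 0 := le_max_left _ _
  have hM2 : (0:ℝ) ≤ max (a.2.2 - a.1) 0 := le_max_right _ _
  rcases min_le_iff.mp hmin with h | h
  · -- IS ≤ r
    unfold IS at h
    unfold sExp
    split_ifs with hb <;> linarith
  · -- ID ≤ r
    unfold ID at h
    unfold sExp
    split_ifs with hb <;> linarith
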